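/- arXiv:1912.06873 — 4 statements merged into one kernel-verified Lean document; each statement's English description precedes it below -/
import Mathlib

section
/- For a decorated permutation $\sigma$ on $[n]$, the number of weak $i$-excedances is the same for all $i \in [n]$: $|W_i(\sigma)| = |W_j(\sigma)|$ for all $i, j \in [n]$. -/
open Fin.NatCast

/-- The cyclic interval `{a, a+1, ..., a+l-1}` in `Fin n` (taken mod `n`). -/
def cycInterval {n : ℕ} [NeZero n] (a : Fin n) (l : ℕ) : Finset (Fin n) :=
  (Finset.range l).image fun t : ℕ => a + (t : Fin n)

/-- The decorated permutation `π_{k,n}` of `U_{k,n}`: `i ↦ i + (n-k) (mod n)`. -/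
def piU (n k : ℕ) [NeZero n] : Equiv.Perm (Fin n) :=
  Equiv.addRight (((n - k : ℕ)) : Fin n)

/-- The cyclic `i`-order on `Fin n`: `a <_i b` iff `a - i < b - i`. -/
def ltI {n : ℕ} [NeZero n] (i a b : Fin n) : Prop := a - i < b - i

/-- The set of weak `i`-excedances of `σ` with decoration `D`
(`D j = true` meaning an overlined fixed point `j`). -/
noncomputable def weakExcSet {n : ℕ} [NeZero n] (σ : Fin n → Fin n) (D : Fin n → Bool)
    (i : Fin n) : Finset (Fin n) :=
  by classical exact Finset.univ.filter fun j => (σ j = j ∧ D j = true) ∨ ltI i j (σ j)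

/-- The next position after `p` (cyclically) not belonging to the frozen set `F`. -/
noncomputable def nextFree {n : ℕ} [NeZero n] (F : Finset (Fin n)) (p : Fin n) : Fin n :=
  p + ((sInf {t : ℕ | 1 ≤ t ∧ p + (t : Fin n) ∉ F} : ℕ) : Fin n)

/-- The previous position before `p` (cyclically) not belonging to the frozen set `F`. -/
noncomputable def prevFree {n : ℕ} [NeZero n] (F : Finset (Fin n)) (p : Fin n) : Fin n :=
  p - ((sInf {t : ℕ | 1 ≤ t ∧ p - (t : Fin n) ∉ F} : ℕ) : Fin n)

/-- `ρ←_A(π)`: freeze the values in `A` and cyclically shift the remaining values one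
place to the left (skipping frozen positions). -/
noncomputable def rhoL {n : ℕ} [NeZero n] (π : Equiv.Perm (Fin n)) (A : Finset (Fin n)) :
    Fin n → Fin n :=
  fun p => if π p ∈ A then π p
    else π (nextFree (Finset.univ.filter fun q => π q ∈ A) p)

/-- `ρ→_A(π)`: freeze the values in `A` and cyclically shift the remaining values one
place to the right (skipping frozen positions). -/
noncomputable def rhoR {n : ℕ} [NeZero n] (π : Equiv.Perm (Fin n)) (A : Finset (Fin n)) :
    Fin n → Fin n :=
  fun p => if π p ∈ A then π p
    else π (prevFree (Finset.univ.filter fun q => π q ∈ A) p)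


section Aux
variable {n : ℕ} [NeZero n]

lemma mem_weakExc {σ : Fin n → Fin n} {D : Fin n → Bool} {i j : Fin n} :
    j ∈ weakExcSet σ D i ↔ ((σ j = j ∧ D j = true) ∨ (j - i).val < (σ j - i).val) := by
  classical
  unfold weakExcSet
  simp only [Finset.mem_filter, Finset.mem_univ, true_and]
  unfold ltI
  rw [Fin.lt_def]

lemma pred_val' {y : Fin n} (h : y ≠ 0) : (y - 1).val = y.val - 1 := by
  have h1 : 0 < y.val := Nat.pos_of_ne_zero (fun hh => h (Fin.ext (by simp [hh])))
  have h2 : y.val < n := y.isLt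
  rw [Fin.sub_def]
  show (n - (1:Fin n).val + y.val) % n = y.val - 1
  have hv1 : (1:Fin n).val = 1 % n := Fin.val_one' n
  have hn2 : 2 ≤ n := by omega
  have : n - (1:Fin n).val + y.val = (y.val - 1) + n := by
    rw [hv1, Nat.mod_eq_of_lt (by omega)]; omega
  rw [this, Nat.add_mod_right, Nat.mod_eq_of_lt (by omega)]

lemma shift_val {x i : Fin n} (h : x ≠ i) : (x - (i+1)).val + 1 = (x - i).val := by
  have h0 : x - i ≠ 0 := sub_ne_zero_of_ne h
  have h1 : x - (i+1) = (x - i) - 1 := by abel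
  have h2 : 0 < (x - i).val := Nat.pos_of_ne_zero (fun hh => h0 (Fin.ext (by simp [hh])))
  rw [h1, pred_val' h0]; omega

lemma self_shift_val (i : Fin n) : (i - (i+1)).val = n - 1 := by
  have h1 : i - (i+1) = 0 - 1 := by abel
  rw [h1, Fin.sub_def]
  show (n - (1:Fin n).val + (0:Fin n).val) % n = n - 1
  have hv1 : (1:Fin n).val = 1 % n := Fin.val_one' n
  have hn : 0 < n := Nat.pos_of_ne_zero (NeZero.ne n)
  rcases Nat.lt_or_ge n 2 with h | h
  · interval_cases n; simp
  · have : n - (1:Fin n).val + (0:Fin n).val = n - 1 := by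
      rw [hv1, Nat.mod_eq_of_lt (by omega)]; simp
    rw [this, Nat.mod_eq_of_lt (by omega)]

lemma eq_of_shift_max {x i : Fin n} (h : (x - (i+1)).val = n - 1) : x = i := by
  have := self_shift_val i
  have hx : x - (i+1) = i - (i+1) := Fin.ext (by rw [h, this])
  exact sub_left_injective hx

end Aux

section Step
variable {n : ℕ} [NeZero n]

lemma mem_iff_of_ne {σ : Fin n → Fin n} {D : Fin n → Bool} {i x : Fin n}
    (hx : x ≠ i) (hσx : σ x ≠ i) :
    (x ∈ weakExcSet σ D (i+1) ↔ x ∈ weakExcSet σ D i) := by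
  rw [mem_weakExc, mem_weakExc]
  have h1 := shift_val hx
  have h2 := shift_val hσx
  constructor <;> rintro (h | h)
  · exact Or.inl h
  · exact Or.inr (by omega)
  · exact Or.inl h
  · exact Or.inr (by omega)

lemma step_card (σ : Equiv.Perm (Fin n)) (D : Fin n → Bool) (i : Fin n) :
    (weakExcSet (⇑σ) D (i+1)).card = (weakExcSet (⇑σ) D i).card := by
  by_cases hfix : σ i = i
  · congr 1
    ext x
    by_cases hx : x = i
    · subst hx
      rw [mem_weakExc, mem_weakExc]
      simp [hfix, sub_self]
    · exact mem_iff_of_ne hx (fun hh => hx (σ.injective (hh.trans hfix.symm)))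
  · set a := σ.symm i with ha_def
    have ha : σ a = i := σ.apply_symm_apply i
    have hai : a ≠ i := fun hh => hfix (by rw [← hh] at ha ⊢; exact ha)
    have hiW : i ∈ weakExcSet (⇑σ) D i := by
      rw [mem_weakExc]
      refine Or.inr ?_
      rw [sub_self]
      have hne : σ i - i ≠ 0 := sub_ne_zero_of_ne hfix
      have hpos : 0 < (σ i - i).val := by
        have : (σ i - i).val ≠ 0 := fun hh => hne (Fin.ext (by simp [hh]))
        omega
      simpa using hpos
    have haW : a ∉ weakExcSet (⇑σ) D i := by
      rw [mem_weakExc]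
      rintro (⟨h1, _⟩ | h1)
      · exact hai (by rw [← h1, ha])
      · rw [ha, sub_self] at h1; simp at h1
    have hset : weakExcSet (⇑σ) D (i+1) = insert a ((weakExcSet (⇑σ) D i).erase i) := by
      ext x
      rw [Finset.mem_insert, Finset.mem_erase]
      by_cases hxa : x = a
      · subst hxa
        simp only [true_or, iff_true]
        rw [mem_weakExc]
        refine Or.inr ?_
        rw [ha, self_shift_val]
        have h1 : (a - (i+1)).val < n := (a - (i+1)).isLt
        have h2 : (a - (i+1)).val ≠ n - 1 := fun hh => hai (eq_of_shift_max hh)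
        omega
      · have hσxi : σ x ≠ i := fun hh => hxa (by rw [ha_def, ← hh, Equiv.symm_apply_apply])
        by_cases hxi : x = i
        · subst hxi
          rw [mem_weakExc]
          constructor
          · rintro (⟨h1, _⟩ | h1)
            · exact absurd h1 hfix
            · rw [self_shift_val] at h1
              have := (σ x - (x+1)).isLt
              omega
          · rintro (h | ⟨h, _⟩)
            · exact absurd h hxa
            · exact absurd rfl h
        · rw [mem_iff_of_ne hxi hσxi]
          simp [hxa, hxi]
    rw [hset, Finset.card_insert_of_notMem (fun hh => haW (Finset.mem_of_mem_erase hh)),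
      Finset.card_erase_of_mem hiW]
    have := Finset.card_pos.mpr ⟨i, hiW⟩
    omega

end Step

/-- for a decorated permutation `σ` on `[n]`, the number of weak
`i`-excedances is independent of `i`. -/
theorem card_weakExc_const (n : ℕ) [NeZero n] (σ : Equiv.Perm (Fin n)) (D : Fin n → Bool) :
    ∀ i j : Fin n, (weakExcSet (⇑σ) D i).card = (weakExcSet (⇑σ) D j).card := by
  have key : ∀ (i : Fin n) (k : ℕ),
      (weakExcSet (⇑σ) D (i + (k : Fin n))).card = (weakExcSet (⇑σ) D i).card := by
    intro i k
    induction k with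
    | zero => simp
    | succ m ih =>
      have : ((m + 1 : ℕ) : Fin n) = (m : Fin n) + 1 := Nat.cast_succ m
      rw [this, ← add_assoc, step_card, ih]
  intro i j
  have := key i ((j - i).val)
  rw [Fin.cast_val_eq_self, add_sub_cancel] at this
  exact this.symm
end

section
/- Let $A \subseteq [n]$ be a union of disjoint cyclic intervals each of size at most $k-1$. Then the decorated permutation $\overleftarrow{\rho_A}(\pi_{k,n})$ has exactly $k-1$ weak 1-excedances (so its positroid has rank $k-1$). -/
open Fin.NatCast

private lemma aux_wrap {n a e b : ℕ} (ha : a < n) (he : e < n) (hb : b = (a + e) % n) :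
    a + e = b + (if n ≤ a + e then n else 0) := by
  rcases lt_or_ge (a + e) n with h | h
  · rw [if_neg (by omega)]
    rw [Nat.mod_eq_of_lt h] at hb
    omega
  · rw [if_pos h]
    have h2 : a + e - n < n := by omega
    rw [Nat.mod_eq_sub_mod h, Nat.mod_eq_of_lt h2] at hb
    omega

/-- length of the frozen run after `p`, plus one. -/
noncomputable def TT {n : ℕ} [NeZero n] (F : Finset (Fin n)) (p : Fin n) : ℕ :=
  sInf {t : ℕ | 1 ≤ t ∧ p + (t : Fin n) ∉ F}

/-- length of the frozen run before `x`, plus one. -/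
noncomputable def SS {n : ℕ} [NeZero n] (F : Finset (Fin n)) (x : Fin n) : ℕ :=
  sInf {t : ℕ | 1 ≤ t ∧ x - (t : Fin n) ∉ F}

open Fin.CommRing

section AuxLemmas
variable {n : ℕ} [NeZero n] (F : Finset (Fin n))

lemma natCast_n_eq_zero : ((n : ℕ) : Fin n) = 0 := by simp

lemma TT_mem {p : Fin n} (hp : p ∉ F) : 1 ≤ TT F p ∧ p + ((TT F p : ℕ) : Fin n) ∉ F := by
  have hne : Set.Nonempty {t : ℕ | 1 ≤ t ∧ p + (t : Fin n) ∉ F} :=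
    ⟨n, Nat.pos_of_ne_zero (NeZero.ne n), by rw [natCast_n_eq_zero, add_zero]; exact hp⟩
  exact Nat.sInf_mem hne

lemma TT_le_n {p : Fin n} (hp : p ∉ F) : TT F p ≤ n :=
  Nat.sInf_le ⟨Nat.pos_of_ne_zero (NeZero.ne n), by rw [natCast_n_eq_zero, add_zero]; exact hp⟩

lemma TT_run (p : Fin n) {s : ℕ} (h1 : 1 ≤ s) (h2 : s < TT F p) : p + (s : Fin n) ∈ F := by
  by_contra h
  exact Nat.notMem_of_lt_sInf h2 ⟨h1, h⟩

variable {q0 : Fin n} (hq0 : q0 ∉ F)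

include hq0 in
lemma SS_mem (x : Fin n) : 1 ≤ SS F x ∧ x - ((SS F x : ℕ) : Fin n) ∉ F := by
  have hne : Set.Nonempty {t : ℕ | 1 ≤ t ∧ x - (t : Fin n) ∉ F} := by
    by_cases hq : q0 = x
    · exact ⟨n, Nat.pos_of_ne_zero (NeZero.ne n), by rw [natCast_n_eq_zero, sub_zero, ← hq]; exact hq0⟩
    · refine ⟨(x - q0).val, ?_, ?_⟩
      · have h0 : x - q0 ≠ 0 := sub_ne_zero.mpr (Ne.symm hq)
        have hv : (x - q0).val ≠ 0 := by
          intro h; exact h0 (Fin.ext (by simpa using h))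
        omega
      · rw [Fin.cast_val_eq_self, sub_sub_cancel]; exact hq0
  exact Nat.sInf_mem hne

lemma SS_run (x : Fin n) {s : ℕ} (h1 : 1 ≤ s) (h2 : s < SS F x) : x - (s : Fin n) ∈ F := by
  by_contra h
  exact Nat.notMem_of_lt_sInf h2 ⟨h1, h⟩

include hq0 in
lemma SS_add {p : Fin n} (hp : p ∉ F) {s0 : ℕ} (h1 : 1 ≤ s0) (h2 : s0 ≤ TT F p) :
    SS F (p + (s0 : Fin n)) = s0 := by
  have hle : SS F (p + (s0 : Fin n)) ≤ s0 :=
    Nat.sInf_le ⟨h1, by rw [add_sub_cancel_right]; exact hp⟩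
  rcases eq_or_lt_of_le hle with h | h
  · exact h
  · exfalso
    have hs1 := SS_mem F hq0 (p + (s0 : Fin n))
    have hT1 := (TT_mem F hp).1
    have heq : (p + (s0 : Fin n)) - ((SS F (p + (s0 : Fin n)) : ℕ) : Fin n)
        = p + (((s0 - SS F (p + (s0 : Fin n)) : ℕ)) : Fin n) := by
      rw [Nat.cast_sub (le_of_lt h)]
      ring
    rw [heq] at hs1
    exact hs1.2 (TT_run F p (by omega) (by omega))

include hq0 in
lemma fiber_card {p : Fin n} (hp : p ∉ F) :
    (Finset.univ.filter (fun x : Fin n => x - ((SS F x : ℕ) : Fin n) = p)).card = TT F p := by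
  classical
  have hset : Finset.univ.filter (fun x : Fin n => x - ((SS F x : ℕ) : Fin n) = p)
      = (Finset.Icc 1 (TT F p)).image (fun s : ℕ => p + (s : Fin n)) := by
    ext x
    simp only [Finset.mem_filter, Finset.mem_univ, true_and, Finset.mem_image, Finset.mem_Icc]
    constructor
    · intro hx
      obtain ⟨s1, hs1eq⟩ : ∃ s1, SS F x = s1 := ⟨_, rfl⟩
      have hs1pos : 1 ≤ s1 := hs1eq ▸ (SS_mem F hq0 x).1
      rw [hs1eq] at hx
      have hx' : x = p + ((s1 : ℕ) : Fin n) := sub_eq_iff_eq_add.mp hx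
      refine ⟨s1, ⟨hs1pos, ?_⟩, hx'.symm⟩
      by_contra hlt
      push_neg at hlt
      have hT := TT_mem F hp
      have heq : x - (((s1 - TT F p : ℕ)) : Fin n) = p + ((TT F p : ℕ) : Fin n) := by
        rw [Nat.cast_sub (le_of_lt hlt), hx']
        ring
      have hrun := SS_run F x (s := s1 - TT F p) (by omega) (by rw [hs1eq]; omega)
      rw [heq] at hrun
      exact hT.2 hrun
    · rintro ⟨s0, ⟨h1, h2⟩, rfl⟩
      rw [SS_add F hq0 hp h1 h2, add_sub_cancel_right]
  rw [hset, Finset.card_image_of_injOn, Nat.card_Icc]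
  · omega
  · intro s hs s' hs' hss
    simp only [Finset.coe_Icc, Set.mem_Icc] at hs hs'
    have h1 : ((s : ℕ) : Fin n) = ((s' : ℕ) : Fin n) := by
      have := hss
      simpa using add_left_cancel this
    have h2 : s % n = s' % n := by
      have := congrArg Fin.val h1
      rwa [Fin.val_natCast, Fin.val_natCast] at this
    have hTn := TT_le_n F hp
    have hn : 0 < n := Nat.pos_of_ne_zero (NeZero.ne n)
    rcases eq_or_lt_of_le (le_trans hs.2 hTn) with h | h
    · rcases eq_or_lt_of_le (le_trans hs'.2 hTn) with h' | h'
      · omega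
      · rw [h, Nat.mod_self, Nat.mod_eq_of_lt h'] at h2; omega
    · rcases eq_or_lt_of_le (le_trans hs'.2 hTn) with h' | h'
      · rw [h', Nat.mod_self, Nat.mod_eq_of_lt h] at h2; omega
      · rw [Nat.mod_eq_of_lt h, Nat.mod_eq_of_lt h'] at h2; omega

include hq0 in
lemma sum_TT : ∑ p ∈ Finset.univ.filter (fun p : Fin n => p ∉ F), TT F p = n := by
  classical
  have h1 : (Finset.univ : Finset (Fin n)).card
      = ∑ p ∈ Finset.univ.filter (fun p : Fin n => p ∉ F),
        (Finset.univ.filter (fun x : Fin n => x - ((SS F x : ℕ) : Fin n) = p)).card := by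
    refine Finset.card_eq_sum_card_fiberwise ?_
    intro x _
    simp only [Finset.mem_coe, Finset.mem_filter, Finset.mem_univ, true_and]
    exact (SS_mem F hq0 x).2
  rw [Finset.card_univ, Fintype.card_fin] at h1
  conv_rhs => rw [h1]
  refine Finset.sum_congr rfl ?_
  intro p hp
  simp only [Finset.mem_filter, Finset.mem_univ, true_and] at hp
  exact (fiber_card F hq0 hp).symm

include hq0 in
lemma g_injective :
    Function.Injective (fun p : Fin n => if p ∈ F then p else p + ((TT F p : ℕ) : Fin n)) := by
  intro a b hab
  simp only at hab
  by_cases ha : a ∈ F <;> by_cases hb : b ∈ F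
  · rwa [if_pos ha, if_pos hb] at hab
  · rw [if_pos ha, if_neg hb] at hab
    exact absurd (hab ▸ ha) (TT_mem F hb).2
  · rw [if_neg ha, if_pos hb] at hab
    exact absurd (hab.symm ▸ hb) (TT_mem F ha).2
  · rw [if_neg ha, if_neg hb] at hab
    have h1 : SS F (a + ((TT F a : ℕ) : Fin n)) = TT F a :=
      SS_add F hq0 ha (TT_mem F ha).1 le_rfl
    have h2 : SS F (b + ((TT F b : ℕ) : Fin n)) = TT F b :=
      SS_add F hq0 hb (TT_mem F hb).1 le_rfl
    have h3 : TT F a = TT F b := by rw [← h1, ← h2, hab]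
    rw [h3] at hab
    exact add_right_cancel hab

end AuxLemmas

/-- if `A ⊆ [n]` is a union of disjoint cyclic intervals, each of size at
most `k - 1` (equivalently, `A` contains no cyclic interval of length `k`), then
`ρ←_A(π_{k,n})` has exactly `k - 1` weak 1-excedances, so its positroid has rank `k-1`. -/
theorem rhoL_rank (n k : ℕ) [NeZero n] (hk : 0 < k) (hkn : k ≤ n)
    (A : Finset (Fin n)) (hA : ∀ a : Fin n, ¬ cycInterval a k ⊆ A) :
    (weakExcSet (rhoL (piU n k) A)
      (fun p => decide (piU n k p = p ∧ piU n k p ∈ A)) 0).card = k - 1 := by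
  classical
  have hn : 0 < n := Nat.pos_of_ne_zero (NeZero.ne n)
  have hcn : n - k < n := by omega
  have hσ : ∀ p : Fin n, piU n k p = p + (((n - k : ℕ)) : Fin n) := fun p => rfl
  have cval : (((n - k : ℕ)) : Fin n).val = n - k := by
    rw [Fin.val_natCast]; exact Nat.mod_eq_of_lt hcn
  set F : Finset (Fin n) := Finset.univ.filter (fun q => piU n k q ∈ A) with hF
  have hmemF : ∀ q : Fin n, q ∈ F ↔ piU n k q ∈ A := by
    intro q; rw [hF]; simp
  set f : Fin n → Fin n := rhoL (piU n k) A with hfd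
  have hf : ∀ j : Fin n, f j = if j ∈ F then piU n k j
      else piU n k (j + ((TT F j : ℕ) : Fin n)) := by
    intro j
    rw [hfd]
    simp only [rhoL]
    by_cases hj : piU n k j ∈ A
    · rw [if_pos hj, if_pos ((hmemF j).mpr hj)]
    · rw [if_neg hj, if_neg (fun h => hj ((hmemF j).mp h))]
      rfl
  obtain ⟨q0, hq0⟩ : ∃ q : Fin n, q ∉ F := by
    by_contra h
    push_neg at h
    refine hA 0 ?_
    intro x _
    have h2 := (hmemF ((piU n k).symm x)).mp (h _)
    simpa using h2
  have hTk : ∀ p : Fin n, p ∉ F → TT F p ≤ k := by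
    intro p hp
    by_contra h
    push_neg at h
    refine hA (p + 1 + (((n - k : ℕ)) : Fin n)) ?_
    intro x hx
    simp only [cycInterval, Finset.mem_image, Finset.mem_range] at hx
    obtain ⟨t, ht, rfl⟩ := hx
    have hmem : p + (((t + 1 : ℕ)) : Fin n) ∈ F := TT_run F p (by omega) (by omega)
    rw [hmemF, hσ] at hmem
    convert hmem using 1
    push_cast
    ring
  have hTc : ∀ j : Fin n, j ∉ F → TT F j + (n - k) ≤ n := by
    intro j hj
    have := hTk j hj
    omega
  have hdF : ∀ j : Fin n, j ∈ F → (f j - j).val = n - k := by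
    intro j hj
    rw [hf j, if_pos hj, hσ, add_sub_cancel_left, cval]
  have hdNF : ∀ j : Fin n, j ∉ F → (f j - j).val = (TT F j + (n - k)) % n := by
    intro j hj
    rw [hf j, if_neg hj, hσ]
    have heq : j + ((TT F j : ℕ) : Fin n) + (((n - k : ℕ)) : Fin n) - j
        = (((TT F j + (n - k) : ℕ)) : Fin n) := by
      push_cast
      ring
    rw [heq, Fin.val_natCast]
  have hdNF2 : ∀ j : Fin n, j ∉ F →
      ((f j - j).val = 0 ∧ TT F j + (n - k) = n) ∨
      ((f j - j).val = TT F j + (n - k) ∧ TT F j + (n - k) < n) := by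
    intro j hj
    rcases eq_or_lt_of_le (hTc j hj) with h | h
    · left; rw [hdNF j hj, h, Nat.mod_self]; exact ⟨rfl, rfl⟩
    · right; rw [hdNF j hj, Nat.mod_eq_of_lt h]; exact ⟨rfl, h⟩
  have hval : ∀ j : Fin n, j.val + (f j - j).val
      = (f j).val + (if n ≤ j.val + (f j - j).val then n else 0) := by
    intro j
    refine aux_wrap j.isLt (f j - j).isLt ?_
    have h1 : f j = (f j - j) + j := (sub_add_cancel _ _).symm
    conv_lhs => rw [h1]
    rw [Fin.val_add, Nat.add_comm]
  have hfix_iff : ∀ j : Fin n, f j = j ↔ (f j - j).val = 0 := by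
    intro j
    constructor
    · intro h; rw [h]; simp
    · intro h
      have h2 : f j - j = 0 := Fin.ext (by simpa using h)
      exact sub_eq_zero.mp h2
  have hlt_iff : ∀ j : Fin n, j < f j ↔
      ((f j - j).val ≠ 0 ∧ j.val + (f j - j).val < n) := by
    intro j
    have hv := hval j
    have h1 := (f j - j).isLt
    have h2 := j.isLt
    rw [Fin.lt_def]
    rcases le_or_gt n (j.val + (f j - j).val) with h | h
    · rw [if_pos h] at hv; omega
    · rw [if_neg (by omega)] at hv; omega
  set Exc := Finset.univ.filter (fun j : Fin n => j < f j) with hExc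
  set Fix := Finset.univ.filter (fun j : Fin n => f j = j) with hFix
  set Wr := Finset.univ.filter
    (fun j : Fin n => n ≤ j.val + (f j - j).val) with hWr
  set Wz := Finset.univ.filter
    (fun j : Fin n => j ∉ F ∧ n ≤ (n - k) + TT F j) with hWz
  set Dec := Finset.univ.filter
    (fun j : Fin n => f j = j ∧ (decide (piU n k j = j ∧ piU n k j ∈ A)) = true) with hDec
  -- E3
  have hsplit : Exc.card
      + (Finset.univ.filter (fun j : Fin n => ¬ j < f j)).card = n := by
    rw [hExc, Finset.card_filter_add_card_filter_not]
    simp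
  have hneg : Finset.univ.filter (fun j : Fin n => ¬ j < f j) = Fix ∪ Wr := by
    rw [hFix, hWr, ← Finset.filter_or]
    refine Finset.filter_congr ?_
    intro j _
    have h1 := (f j - j).isLt
    have h2 := j.isLt
    rw [hlt_iff j, hfix_iff j]
    omega
  have hdisj1 : Disjoint Fix Wr := by
    rw [Finset.disjoint_left]
    intro j hj1 hj2
    rw [hFix, Finset.mem_filter] at hj1
    rw [hWr, Finset.mem_filter] at hj2
    have h3 := (hfix_iff j).mp hj1.2
    have h4 := j.isLt
    omega
  have hE3 : Exc.card + (Fix.card + Wr.card) = n := by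
    rw [← Finset.card_union_of_disjoint hdisj1, ← hneg]
    exact hsplit
  -- E4
  have hσj : ∀ j : Fin n, piU n k j = j ↔ n - k = 0 := by
    intro j
    rw [hσ j, add_eq_left]
    constructor
    · intro h
      have := congrArg Fin.val h
      rwa [cval, Fin.val_zero] at this
    · intro h; rw [h]; simp
  have hFixeq : Fix = Dec ∪ Wz := by
    ext j
    rw [hFix, hDec, hWz]
    simp only [Finset.mem_union, Finset.mem_filter, Finset.mem_univ, true_and,
      decide_eq_true_eq]
    by_cases hj : j ∈ F
    · have hd := hdF j hj
      have hjA : piU n k j ∈ A := (hmemF j).mp hj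
      constructor
      · intro hfj
        left
        have h0 : (f j - j).val = 0 := (hfix_iff j).mp hfj
        exact ⟨hfj, (hσj j).mpr (by omega), hjA⟩
      · rintro (⟨h, _⟩ | ⟨hnj, _⟩)
        · exact h
        · exact absurd hj hnj
    · have hd2 := hdNF2 j hj
      have hT1 := (TT_mem F hj).1
      have hTc2 := hTc j hj
      constructor
      · intro hfj
        right
        have h0 : (f j - j).val = 0 := (hfix_iff j).mp hfj
        exact ⟨hj, by omega⟩
      · rintro (⟨_, _, hjA⟩ | ⟨_, hw⟩)
        · exact absurd ((hmemF j).mpr hjA) hj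
        · exact (hfix_iff j).mpr (by omega)
  have hdisj2 : Disjoint Dec Wz := by
    rw [Finset.disjoint_left]
    intro j hj1 hj2
    rw [hDec, Finset.mem_filter] at hj1
    rw [hWz, Finset.mem_filter] at hj2
    simp only [decide_eq_true_eq] at hj1
    exact hj2.2.1 ((hmemF j).mpr hj1.2.2.2)
  have hE4 : Fix.card = Dec.card + Wz.card := by
    rw [hFixeq, Finset.card_union_of_disjoint hdisj2]
  -- E1 : sum of displacements
  have hpart := Finset.sum_filter_add_sum_filter_not Finset.univ
    (fun j : Fin n => j ∈ F) (fun j => (f j - j).val)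
  have hA1 : ∑ j ∈ Finset.univ.filter (fun j : Fin n => j ∈ F), (f j - j).val
      = (n - k) * (Finset.univ.filter (fun j : Fin n => j ∈ F)).card := by
    rw [Finset.sum_congr rfl (fun j hj => hdF j (Finset.mem_filter.mp hj).2),
      Finset.sum_const, smul_eq_mul, Nat.mul_comm]
  have hA2 : ∑ j ∈ Finset.univ.filter (fun j : Fin n => j ∉ F),
      ((f j - j).val + (if n ≤ (n - k) + TT F j then n else 0))
      = ∑ j ∈ Finset.univ.filter (fun j : Fin n => j ∉ F), ((n - k) + TT F j) := by
    refine Finset.sum_congr rfl ?_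
    intro j hj
    have hj' : j ∉ F := (Finset.mem_filter.mp hj).2
    rcases hdNF2 j hj' with ⟨h1, h2⟩ | ⟨h1, h2⟩
    · rw [h1, if_pos (by omega)]; omega
    · rw [h1, if_neg (by omega)]; omega
  have hA3 : ∑ j ∈ Finset.univ.filter (fun j : Fin n => j ∉ F),
      (if n ≤ (n - k) + TT F j then n else 0) = n * Wz.card := by
    rw [← Finset.sum_filter, Finset.filter_filter, ← hWz, Finset.sum_const,
      smul_eq_mul, Nat.mul_comm]
  have hA4 : ∑ j ∈ Finset.univ.filter (fun j : Fin n => j ∉ F), ((n - k) + TT F j)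
      = (n - k) * (Finset.univ.filter (fun j : Fin n => j ∉ F)).card + n := by
    rw [Finset.sum_add_distrib, Finset.sum_const, smul_eq_mul, Nat.mul_comm,
      sum_TT F hq0]
  have hcard : (Finset.univ.filter (fun j : Fin n => j ∈ F)).card
      + (Finset.univ.filter (fun j : Fin n => j ∉ F)).card = n := by
    rw [Finset.card_filter_add_card_filter_not]
    simp
  have e1 : (∑ j ∈ Finset.univ.filter (fun j : Fin n => j ∉ F), (f j - j).val)
      + n * Wz.card
      = (n - k) * (Finset.univ.filter (fun j : Fin n => j ∉ F)).card + n := by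
    rw [← hA4, ← hA2, Finset.sum_add_distrib, hA3]
  -- E2 : f is a bijection
  have hinj : Function.Injective f := by
    have hg := g_injective F hq0
    intro a b hab
    have h1 : ∀ j : Fin n, f j
        = piU n k (if j ∈ F then j else j + ((TT F j : ℕ) : Fin n)) := by
      intro j
      rw [hf j, apply_ite (piU n k)]
    rw [h1 a, h1 b] at hab
    exact hg ((piU n k).injective hab)
  have hbij : Function.Bijective f := Finite.injective_iff_bijective.mp hinj
  have hsumf : ∑ j : Fin n, (f j).val = ∑ j : Fin n, j.val :=
    hbij.sum_comp (fun j => j.val)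
  have hE2 : ∑ j : Fin n, (f j - j).val = n * Wr.card := by
    have h1 : ∑ j : Fin n, (j.val + (f j - j).val)
        = ∑ j : Fin n, ((f j).val + (if n ≤ j.val + (f j - j).val then n else 0)) :=
      Finset.sum_congr rfl (fun j _ => hval j)
    rw [Finset.sum_add_distrib, Finset.sum_add_distrib, hsumf] at h1
    have h2 : ∑ j : Fin n, (if n ≤ j.val + (f j - j).val then n else 0)
        = n * Wr.card := by
      rw [← Finset.sum_filter, ← hWr, Finset.sum_const, smul_eq_mul, Nat.mul_comm]
    rw [h2] at h1
    exact Nat.add_left_cancel h1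
  -- combine E1, E2
  have key : n * Wr.card + n * Wz.card = n * ((n - k) + 1) := by
    rw [← hE2]
    calc (∑ j : Fin n, (f j - j).val) + n * Wz.card
        = (n - k) * (Finset.univ.filter (fun j : Fin n => j ∈ F)).card
          + ((n - k) * (Finset.univ.filter (fun j : Fin n => j ∉ F)).card + n) := by
          rw [← hpart, hA1, add_assoc, e1]
      _ = (n - k) * ((Finset.univ.filter (fun j : Fin n => j ∈ F)).card
          + (Finset.univ.filter (fun j : Fin n => j ∉ F)).card) + n := by ring
      _ = n * ((n - k) + 1) := by rw [hcard]; ring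
  have hWW : Wr.card + Wz.card = (n - k) + 1 := by
    refine Nat.eq_of_mul_eq_mul_left hn ?_
    rw [Nat.mul_add]
    exact key
  -- final assembly
  have hgoal : weakExcSet f (fun p => decide (piU n k p = p ∧ piU n k p ∈ A)) 0
      = Dec ∪ Exc := by
    ext j
    rw [hDec, hExc]
    simp only [weakExcSet, ltI, sub_zero, Finset.mem_filter, Finset.mem_union,
      Finset.mem_univ, true_and]
  have hdisj3 : Disjoint Dec Exc := by
    rw [Finset.disjoint_left]
    intro j hj1 hj2
    rw [hDec, Finset.mem_filter] at hj1
    rw [hExc, Finset.mem_filter] at hj2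
    simp only [decide_eq_true_eq] at hj1
    rw [hj1.2.1] at hj2
    exact lt_irrefl j hj2.2
  rw [hgoal, Finset.card_union_of_disjoint hdisj3]
  omega
end

section
/- For $A \subseteq [n]$, the inverse of the right cyclic shift of $\pi_{k,n}$ by $A$ equals the left cyclic shift of $\pi_{n-k,n}$ by $B := \pi_{k,n}^{-1}(A)$: $\overrightarrow{\rho_A}(\pi_{k,n})^{-1} = \overleftarrow{\rho_B}(\pi_{n-k,n})$. -/
open Fin.NatCast

open Fin.CommRing

lemma sInf_mem_sub {n : ℕ} [NeZero n] (A : Finset (Fin n)) (z : Fin n) (hz : z ∉ A) :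
    1 ≤ sInf {t : ℕ | 1 ≤ t ∧ z - (t : Fin n) ∉ A} ∧
      z - ((sInf {t : ℕ | 1 ≤ t ∧ z - (t : Fin n) ∉ A} : ℕ) : Fin n) ∉ A := by
  have hne : {t : ℕ | 1 ≤ t ∧ z - (t : Fin n) ∉ A}.Nonempty :=
    ⟨n, Nat.one_le_iff_ne_zero.2 (NeZero.ne n), by simp [Fin.natCast_self, hz]⟩
  exact Nat.sInf_mem hne

lemma sInf_mem_add {n : ℕ} [NeZero n] (A : Finset (Fin n)) (z : Fin n) (hz : z ∉ A) :
    1 ≤ sInf {t : ℕ | 1 ≤ t ∧ z + (t : Fin n) ∉ A} ∧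
      z + ((sInf {t : ℕ | 1 ≤ t ∧ z + (t : Fin n) ∉ A} : ℕ) : Fin n) ∉ A := by
  have hne : {t : ℕ | 1 ≤ t ∧ z + (t : Fin n) ∉ A}.Nonempty :=
    ⟨n, Nat.one_le_iff_ne_zero.2 (NeZero.ne n), by simp [Fin.natCast_self, hz]⟩
  exact Nat.sInf_mem hne

lemma core_sub {n : ℕ} [NeZero n] (A : Finset (Fin n)) (x : Fin n) (hx : x ∉ A) :
    sInf {t : ℕ | 1 ≤ t ∧
        (x - ((sInf {t : ℕ | 1 ≤ t ∧ x - (t : Fin n) ∉ A} : ℕ) : Fin n)) + (t : Fin n) ∉ A}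
      = sInf {t : ℕ | 1 ≤ t ∧ x - (t : Fin n) ∉ A} := by
  set s := sInf {t : ℕ | 1 ≤ t ∧ x - (t : Fin n) ∉ A} with hs
  have hmin : ∀ t, t < s → ¬ (1 ≤ t ∧ x - (t : Fin n) ∉ A) := fun t ht =>
    Nat.notMem_of_lt_sInf ht
  have hsT : s ∈ {t : ℕ | 1 ≤ t ∧ (x - (s : Fin n)) + (t : Fin n) ∉ A} :=
    ⟨(sInf_mem_sub A x hx).1, by simpa using hx⟩
  refine le_antisymm (Nat.sInf_le hsT) (le_csInf ⟨s, hsT⟩ ?_)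
  rintro t ⟨ht1, ht2⟩
  by_contra hlt
  push_neg at hlt
  have htle : t ≤ s := le_of_lt hlt
  have heq : x - (s : Fin n) + (t : Fin n) = x - (((s - t : ℕ)) : Fin n) := by
    rw [Nat.cast_sub htle]; ring
  rw [heq] at ht2
  exact hmin (s - t) (by omega) ⟨by omega, ht2⟩

lemma core_add {n : ℕ} [NeZero n] (A : Finset (Fin n)) (x : Fin n) (hx : x ∉ A) :
    sInf {t : ℕ | 1 ≤ t ∧
        (x + ((sInf {t : ℕ | 1 ≤ t ∧ x + (t : Fin n) ∉ A} : ℕ) : Fin n)) - (t : Fin n) ∉ A}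
      = sInf {t : ℕ | 1 ≤ t ∧ x + (t : Fin n) ∉ A} := by
  set s := sInf {t : ℕ | 1 ≤ t ∧ x + (t : Fin n) ∉ A} with hs
  have hmin : ∀ t, t < s → ¬ (1 ≤ t ∧ x + (t : Fin n) ∉ A) := fun t ht =>
    Nat.notMem_of_lt_sInf ht
  have hsT : s ∈ {t : ℕ | 1 ≤ t ∧ (x + (s : Fin n)) - (t : Fin n) ∉ A} :=
    ⟨(sInf_mem_add A x hx).1, by simpa using hx⟩
  refine le_antisymm (Nat.sInf_le hsT) (le_csInf ⟨s, hsT⟩ ?_)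
  rintro t ⟨ht1, ht2⟩
  by_contra hlt
  push_neg at hlt
  have htle : t ≤ s := le_of_lt hlt
  have heq : x + (s : Fin n) - (t : Fin n) = x + (((s - t : ℕ)) : Fin n) := by
    rw [Nat.cast_sub htle]; ring
  rw [heq] at ht2
  exact hmin (s - t) (by omega) ⟨by omega, ht2⟩

/-- `ρ→_A(π_{k,n})⁻¹ = ρ←_B(π_{n-k,n})` where `B = π_{k,n}⁻¹(A)`; stated
as: the two maps are two-sided inverses of each other (as permutations, ignoring
decorations). -/
theorem rhoR_inverse (n k : ℕ) [NeZero n] (hk : k ≤ n) (A : Finset (Fin n)) :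
    (∀ x : Fin n,
      rhoL (piU n (n - k)) (A.image ⇑(piU n k).symm) (rhoR (piU n k) A x) = x) ∧
    (∀ x : Fin n,
      rhoR (piU n k) A (rhoL (piU n (n - k)) (A.image ⇑(piU n k).symm) x) = x) := by
  set c : Fin n := (k : Fin n) with hcdef
  have hc : ((n - k : ℕ) : Fin n) = -c := by
    rw [Nat.cast_sub hk, Fin.natCast_self, zero_sub]
  have hπ : ∀ p : Fin n, piU n k p = p - c := by
    intro p; simp [piU, hc, sub_eq_add_neg]
  have hσ : ∀ p : Fin n, piU n (n - k) p = p + c := by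
    intro p; simp [piU, Nat.sub_sub_self hk]; rfl
  have hsymm : ∀ p : Fin n, (piU n k).symm p = p + c := by
    intro p; simp [piU, hc, sub_eq_add_neg]
  set B := A.image ⇑(piU n k).symm with hBdef
  have hmemB : ∀ q : Fin n, (q ∈ B) ↔ q - c ∈ A := by
    intro q
    simp only [hBdef, Finset.mem_image, hsymm]
    constructor
    · rintro ⟨a, ha, rfl⟩; simpa using ha
    · intro h; exact ⟨q - c, h, by ring⟩
  have hFmem : ∀ q : Fin n,
      (q ∈ Finset.univ.filter fun q => piU n k q ∈ A) ↔ q - c ∈ A := by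
    intro q; simp [hπ]
  have hGmem : ∀ q : Fin n,
      (q ∈ Finset.univ.filter fun q => piU n (n - k) q ∈ B) ↔ q ∈ A := by
    intro q; simp [hσ, hmemB]
  constructor
  · intro x
    by_cases h1 : x - c ∈ A
    · have hx1 : piU n k x ∈ A := by rw [hπ]; exact h1
      simp only [rhoR]
      rw [if_pos hx1, hπ]
      have hb : piU n (n - k) (x - c) ∈ B := by
        rw [hσ, hmemB]; simpa using h1
      simp only [rhoL]
      rw [if_pos hb, hσ]; ring
    · have hx1 : piU n k x ∉ A := by rw [hπ]; exact h1
      set s := sInf {t : ℕ | 1 ≤ t ∧ x - c - (t : Fin n) ∉ A} with hsdef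
      have hsetF : {t : ℕ | 1 ≤ t ∧
          x - (t : Fin n) ∉ Finset.univ.filter fun q => piU n k q ∈ A} =
          {t : ℕ | 1 ≤ t ∧ x - c - (t : Fin n) ∉ A} := by
        ext t; simp only [Set.mem_setOf_eq, hFmem, sub_right_comm]
      have e1 : rhoR (piU n k) A x = x - c - (s : Fin n) := by
        simp only [rhoR, prevFree]
        rw [if_neg hx1, hsetF, ← hsdef, hπ]
        ring
      rw [e1]
      have hzs := (sInf_mem_sub A (x - c) h1).2
      rw [← hsdef] at hzs
      have hb : piU n (n - k) (x - c - (s : Fin n)) ∉ B := by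
        rw [hσ, hmemB]; simpa using hzs
      have hsetG : {t : ℕ | 1 ≤ t ∧
          (x - c - (s : Fin n)) + (t : Fin n) ∉
            Finset.univ.filter fun q => piU n (n - k) q ∈ B} =
          {t : ℕ | 1 ≤ t ∧ (x - c - (s : Fin n)) + (t : Fin n) ∉ A} := by
        ext t; simp only [Set.mem_setOf_eq, hGmem]
      have hcore := core_sub A (x - c) h1
      rw [← hsdef] at hcore
      simp only [rhoL, nextFree]
      rw [if_neg hb, hsetG, hcore, hσ]
      ring
  · intro x
    by_cases h2 : x ∈ A
    · have hb : piU n (n - k) x ∈ B := by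
        rw [hσ, hmemB]; simpa using h2
      simp only [rhoL]
      rw [if_pos hb, hσ]
      have ha : piU n k (x + c) ∈ A := by rw [hπ]; simpa using h2
      simp only [rhoR]
      rw [if_pos ha, hπ]; ring
    · set u := sInf {t : ℕ | 1 ≤ t ∧ x + (t : Fin n) ∉ A} with hudef
      have hb : piU n (n - k) x ∉ B := by
        rw [hσ, hmemB]; simpa using h2
      have hsetG : {t : ℕ | 1 ≤ t ∧
          x + (t : Fin n) ∉ Finset.univ.filter fun q => piU n (n - k) q ∈ B} =
          {t : ℕ | 1 ≤ t ∧ x + (t : Fin n) ∉ A} := by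
        ext t; simp only [Set.mem_setOf_eq, hGmem]
      have e1 : rhoL (piU n (n - k)) B x = x + (u : Fin n) + c := by
        simp only [rhoL, nextFree]
        rw [if_neg hb, hsetG, ← hudef, hσ]
      rw [e1]
      have hxu := (sInf_mem_add A x h2).2
      rw [← hudef] at hxu
      have ha : piU n k (x + (u : Fin n) + c) ∉ A := by
        rw [hπ]; simpa using hxu
      have hsetF : {t : ℕ | 1 ≤ t ∧
          (x + (u : Fin n) + c) - (t : Fin n) ∉
            Finset.univ.filter fun q => piU n k q ∈ A} =
          {t : ℕ | 1 ≤ t ∧ (x + (u : Fin n)) - (t : Fin n) ∉ A} := by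
        ext t
        simp only [Set.mem_setOf_eq, hFmem]
        rw [show x + (u : Fin n) + c - (t : Fin n) - c
            = x + (u : Fin n) - (t : Fin n) from by ring]
      have hcore := core_add A x h2
      rw [← hudef] at hcore
      simp only [rhoR, prevFree]
      rw [if_neg ha, hsetF, hcore, hπ]
      ring
end

section
/- Let $P$ be a matroid on $[n]$ whose circuits are exactly: the cyclic intervals $L_1, \ldots, L_m$ (pairwise disjoint unions with frozen intervals covering at most $k-1$ elements in total) together with all $k$-subsets of $[n]$ containing no $L_j$. Then every $(k+1)$-subset of $[n]$ is a union of circuits of $P$; hence the positroid $P_{\overleftarrow{\rho_A}(\pi_{k,n})}$ is a quotient of $U_{k,n}$. -/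
open Fin.NatCast

lemma mem_cycInterval' {n : ℕ} [NeZero n] {s u : Fin n} {d : ℕ} (hd : d ≤ n) :
    u ∈ cycInterval s d ↔ (u - s).val < d := by
  simp only [cycInterval, Finset.mem_image, Finset.mem_range]
  constructor
  · rintro ⟨t, ht, rfl⟩
    rw [add_sub_cancel_left]
    rwa [Fin.val_cast_of_lt (lt_of_lt_of_le ht hd)]
  · intro h
    exact ⟨(u - s).val, h, by rw [Fin.cast_val_eq_self, add_sub_cancel]⟩


lemma card_cycInterval' {n : ℕ} [NeZero n] {s : Fin n} {d : ℕ} (hd : d ≤ n) :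
    (cycInterval s d).card = d := by
  rw [cycInterval, Finset.card_image_of_injOn, Finset.card_range]
  intro t1 h1 t2 h2 h
  simp only [Finset.coe_range, Set.mem_Iio] at h1 h2
  have h' := add_left_cancel h
  have h'' : (t1 : Fin n).val = (t2 : Fin n).val := by rw [h']
  rwa [Fin.val_cast_of_lt (lt_of_lt_of_le h1 hd), Fin.val_cast_of_lt (lt_of_lt_of_le h2 hd)] at h''

/-- val of a sum splits when no wraparound. -/
lemma fin_val_add (n : ℕ) [NeZero n] (c e : Fin n) : (c + e).val = (c.val + e.val) % n :=
  Fin.val_add c e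

lemma fin_sub_val {n : ℕ} [NeZero n] (c e : Fin n) (h : e.val ≤ c.val) :
    (c - e).val = c.val - e.val := by
  have h1 : ((c - e) + e).val = c.val := by rw [sub_add_cancel]
  rw [Fin.val_add] at h1
  have h2 : (c - e).val < n := (c - e).isLt
  have h3 : e.val < n := e.isLt
  have h4 : c.val < n := c.isLt
  rcases Nat.lt_or_ge ((c - e).val + e.val) n with hlt | hge
  · rw [Nat.mod_eq_of_lt hlt] at h1; omega
  · rw [Nat.mod_eq_sub_mod hge, Nat.mod_eq_of_lt (by omega)] at h1; omega

lemma val_sub_split {n : ℕ} [NeZero n] {x s u : Fin n} {d : ℕ} (hd : d ≤ n)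
    (hx : x ∉ cycInterval s d) (hu : u ∈ cycInterval s d) :
    (u - x).val = (s - x).val + (u - s).val := by
  rw [mem_cycInterval' hd] at hu
  set b := (s - x).val with hb
  set t := (u - s).val with ht
  have hxs : ¬ ((x - s).val < d) := by rw [← mem_cycInterval' hd]; exact hx
  have hd1 : 1 ≤ d := by omega
  have hb1 : 1 ≤ b := by
    by_contra h
    have h0 : s - x = 0 := Fin.ext (by simp only [Fin.val_zero]; omega)
    have : x = s := (sub_eq_zero.mp h0).symm
    exact hxs (by rw [this, sub_self]; simpa using (by omega : 0 < d))
  have hzero : ((s - x) + (x - s)).val = 0 := by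
    rw [sub_add_sub_cancel', sub_self, Fin.val_zero]
  rw [Fin.val_add] at hzero
  have hxsv : (x - s).val = n - b := by
    have h2 : (x - s).val < n := (x - s).isLt
    have h4 : b < n := (s - x).isLt
    rcases Nat.lt_or_ge (b + (x - s).val) n with hlt | hge
    · rw [Nat.mod_eq_of_lt hlt] at hzero; omega
    · rw [Nat.mod_eq_sub_mod hge, Nat.mod_eq_of_lt (by omega)] at hzero; omega
  have hbd : d ≤ n - b := by omega
  have huv : u - x = (s - x) + (u - s) := by abel
  rw [huv, Fin.val_add, ← hb, ← ht, Nat.mod_eq_of_lt (by omega)]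
/-- with `A = J_1 ∪ ⋯ ∪ J_m` a disjoint union of maximal cyclic intervals
`J_j = [a_j, a_j + l_j - 1]` of total size at most `k - 1`, and circuits
`𝒞_A = {L_j} ∪ {k-subsets containing no L_j}` (where `L_j` extends `J_j` clockwise to an
interval of size `k`), every `(k+1)`-subset of `[n]` — i.e. every circuit of `U_{k,n}` —
is a union of members of `𝒞_A`; hence the positroid of `ρ←_A(π_{k,n})` is a quotient of
`U_{k,n}`. -/
theorem every_circuit_is_union (n k m : ℕ) [NeZero n] (hk : 0 < k) (hkn : k < n)
    (a : Fin m → Fin n) (l : Fin m → ℕ) (hl : ∀ j, 0 < l j)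
    (hsum : ∑ j : Fin m, l j ≤ k - 1)
    (hJ : Set.PairwiseDisjoint Set.univ fun j : Fin m => cycInterval (a j) (l j))
    (hmax : ∀ j : Fin m,
      a j + (l j : Fin n) ∉
        Finset.univ.biUnion (fun j' : Fin m => cycInterval (a j') (l j')) ∧
      a j - 1 ∉ Finset.univ.biUnion (fun j' : Fin m => cycInterval (a j') (l j')))
    (O : Finset (Fin n)) (hO : O.card = k + 1) :
    ∃ S : Finset (Finset (Fin n)),
      (∀ C ∈ S, (∃ j : Fin m, C = cycInterval (a j + (l j : Fin n)) (k - l j)) ∨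
        (C.card = k ∧ ∀ j : Fin m, ¬ cycInterval (a j + (l j : Fin n)) (k - l j) ⊆ C)) ∧
      S.sup id = O := by
  classical
  set L : Fin m → Finset (Fin n) := fun j => cycInterval (a j + (l j : Fin n)) (k - l j)
    with hLdef
  have hlk : ∀ j, l j ≤ k - 1 := fun j =>
    le_trans (Finset.single_le_sum (fun i _ => Nat.zero_le (l i)) (Finset.mem_univ j)) hsum
  have hdn : ∀ j, k - l j ≤ n := fun j => le_of_lt (lt_of_le_of_lt (Nat.sub_le k (l j)) hkn)
  have hd1 : ∀ j, 1 ≤ k - l j := fun j => by have := hlk j; omega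
  have hcard : ∀ j, (L j).card = k - l j := fun j => card_cycInterval' (hdn j)
  set F : Finset (Fin m) := Finset.univ.filter (fun j => L j ⊆ O) with hFdef
  have hLO : ∀ j ∈ F, L j ⊆ O := fun j hj => (Finset.mem_filter.mp hj).2
  have hmemF : ∀ j, L j ⊆ O → j ∈ F := fun j h => Finset.mem_filter.mpr ⟨Finset.mem_univ j, h⟩
  have hTO : F.biUnion L ⊆ O := by
    intro u hu; obtain ⟨j, hj, hu⟩ := Finset.mem_biUnion.mp hu; exact hLO j hj hu
  have hsupL : F.sup L = F.biUnion L := by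
    ext u; simp [Finset.mem_sup, Finset.mem_biUnion]
  by_cases hT : O ⊆ F.biUnion L
  · refine ⟨F.image L, ?_, ?_⟩
    · intro C hC
      obtain ⟨j, hj, rfl⟩ := Finset.mem_image.mp hC
      exact Or.inl ⟨j, rfl⟩
    · rw [Finset.sup_image]
      rw [show (id ∘ L) = L from rfl, hsupL]
      exact Finset.Subset.antisymm hTO hT
  · obtain ⟨x, hxO, hxT⟩ := Finset.not_subset.mp hT
    have hxL : ∀ j ∈ F, x ∉ L j := fun j hj h => hxT (Finset.mem_biUnion.mpr ⟨j, hj, h⟩)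
    have hpair : ∀ j ∈ F, ∀ j' ∈ F, ¬ Disjoint (L j) (L j') := by
      intro j hj j' hj' hdisj
      by_cases hjj : j = j'
      · subst hjj
        rw [disjoint_self] at hdisj
        have := hcard j
        rw [hdisj] at this
        simp at this
        have := hd1 j; omega
      · have hll : l j + l j' ≤ k - 1 := by
          calc l j + l j' = ∑ i ∈ ({j, j'} : Finset (Fin m)), l i := (Finset.sum_pair hjj).symm
            _ ≤ ∑ i : Fin m, l i :=
                Finset.sum_le_sum_of_subset (Finset.subset_univ _)
            _ ≤ k - 1 := hsum
        have hcu : (L j ∪ L j').card = (k - l j) + (k - l j') := by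
          rw [Finset.card_union_of_disjoint hdisj, hcard, hcard]
        have hsub : L j ∪ L j' ⊆ O := Finset.union_subset (hLO j hj) (hLO j' hj')
        have hEq : L j ∪ L j' = O := by
          apply Finset.eq_of_subset_of_card_le hsub
          rw [hcu, hO]
          have := hlk j; have := hlk j'; omega
        have : x ∈ L j ∪ L j' := hEq ▸ hxO
        rcases Finset.mem_union.mp this with h | h
        · exact hxL j hj h
        · exact hxL j' hj' h
    by_cases hF : F.Nonempty
    · obtain ⟨j0, hj0F, hj0max⟩ :=
        Finset.exists_max_image F (fun j => (a j + (l j : Fin n) - x).val) hF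
      have hykey : ∀ j ∈ F, a j0 + (l j0 : Fin n) ∈ L j := by
        intro j hj
        obtain ⟨z, hzj, hzj0⟩ := Finset.not_disjoint_iff.mp (hpair j hj j0 hj0F)
        rw [show L j = cycInterval (a j + (l j : Fin n)) (k - l j) from rfl,
          mem_cycInterval' (hdn j)]
        have e1 := val_sub_split (hdn j) (by simpa [hLdef] using hxL j hj)
          (by simpa [hLdef] using hzj)
        have e2 := val_sub_split (hdn j0) (by simpa [hLdef] using hxL j0 hj0F)
          (by simpa [hLdef] using hzj0)
        have hmax' : ((a j + (l j : Fin n)) - x).val ≤ ((a j0 + (l j0 : Fin n)) - x).val :=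
          hj0max j hj
        have htj : (z - (a j + (l j : Fin n))).val < k - l j := by
          have h5 := hzj
          rw [show L j = cycInterval (a j + (l j : Fin n)) (k - l j) from rfl,
            mem_cycInterval' (hdn j)] at h5
          exact h5
        have hyx : ((a j0 + (l j0 : Fin n)) - (a j + (l j : Fin n)))
            = ((a j0 + (l j0 : Fin n)) - x) - ((a j + (l j : Fin n)) - x) := by abel
        rw [hyx, fin_sub_val _ _ hmax']
        omega
      have hyO : a j0 + (l j0 : Fin n) ∈ O := hLO j0 hj0F (hykey j0 hj0F)
      refine ⟨insert (O.erase (a j0 + (l j0 : Fin n))) (F.image L), ?_, ?_⟩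
      · intro C hC
        rcases Finset.mem_insert.mp hC with rfl | hC
        · right
          refine ⟨by rw [Finset.card_erase_of_mem hyO, hO]; omega, ?_⟩
          intro j hsubC
          by_cases hjF : j ∈ F
          · exact (Finset.notMem_erase (a j0 + (l j0 : Fin n)) O) (hsubC (hykey j hjF))
          · exact hjF (hmemF j (Finset.Subset.trans hsubC (Finset.erase_subset (a j0 + (l j0 : Fin n)) O)))
        · obtain ⟨j, hj, rfl⟩ := Finset.mem_image.mp hC
          exact Or.inl ⟨j, rfl⟩
      · rw [Finset.sup_insert, Finset.sup_image, show (id ∘ L) = L from rfl, hsupL]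
        apply Finset.Subset.antisymm
        · exact Finset.union_subset (Finset.Subset.trans (Finset.erase_subset (a j0 + (l j0 : Fin n)) O)
            Finset.Subset.rfl) hTO
        · intro u hu
          by_cases huy : u = a j0 + (l j0 : Fin n)
          · subst huy
            exact Finset.mem_union_right _ (Finset.mem_biUnion.mpr ⟨j0, hj0F, hykey j0 hj0F⟩)
          · exact Finset.mem_union_left _ (Finset.mem_erase.mpr ⟨huy, hu⟩)
    · rw [Finset.not_nonempty_iff_eq_empty] at hF
      have h2 : 1 < O.card := by omega
      obtain ⟨y, hy, z, hz, hyz⟩ := Finset.one_lt_card.mp h2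
      have hnotF : ∀ j : Fin m, ∀ C ⊆ O, ¬ L j ⊆ C := by
        intro j C hCO hLC
        have := hmemF j (Finset.Subset.trans hLC hCO)
        rw [hF] at this
        exact absurd this (Finset.notMem_empty j)
      refine ⟨{O.erase y, O.erase z}, ?_, ?_⟩
      · intro C hC
        have hCs : C = O.erase y ∨ C = O.erase z := by simpa using hC
        right
        rcases hCs with rfl | rfl
        · exact ⟨by rw [Finset.card_erase_of_mem hy, hO]; omega,
            fun j => hnotF j _ (Finset.erase_subset y O)⟩
        · exact ⟨by rw [Finset.card_erase_of_mem hz, hO]; omega,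
            fun j => hnotF j _ (Finset.erase_subset z O)⟩
      · rw [Finset.sup_insert, Finset.sup_singleton]
        simp only [id]
        ext u
        simp only [Finset.sup_eq_union, Finset.mem_union, Finset.mem_erase]
        constructor
        · rintro (⟨_, h⟩ | ⟨_, h⟩) <;> exact h
        · intro hu
          by_cases huy : u = y
          · exact Or.inr ⟨by rw [huy]; exact hyz, hu⟩
          · exact Or.inl ⟨huy, hu⟩
end
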